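/- Fix M ∈ ℂ^{n×n} and ε > 0, and let M' = M ⊕ εN ⊕ εN ∈ ℂ^{(n+4)×(n+4)} where N = [[0,2],[0,0]]. Let q be a uniformly random unit vector in ℂ^n and q' a uniformly random unit vector in ℂ^{n+4}. Then Pr(|q* M q| ≤ ε) ≤ Pr(|q'^* M' q'| ≤ ε). -/

import Mathlib

open MeasureTheory Matrix Filter
open scoped Pointwise

noncomputable section

/-- The Borel σ-algebra on the unitary group. -/
instance unitaryMeasurableSpace {n : ℕ} : MeasurableSpace (Matrix.unitaryGroup (Fin n) ℂ) :=
  borel _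

instance unitaryBorelSpace {n : ℕ} : BorelSpace (Matrix.unitaryGroup (Fin n) ℂ) :=
  ⟨rfl⟩

/-- The first column of a unitary matrix: a uniformly random unit vector when the
unitary is Haar-distributed. -/
def firstColumn {n : ℕ} (h : 1 ≤ n) (U : Matrix.unitaryGroup (Fin n) ℂ) : Fin n → ℂ :=
  fun i => (U : Matrix (Fin n) (Fin n) ℂ) i ⟨0, h⟩

/-- The quadratic form `x* M x`. -/
def qform {m : ℕ} (M : Matrix (Fin m) (Fin m) ℂ) (x : Fin m → ℂ) : ℂ :=
  dotProduct (star x) (M.mulVec x)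

/-- Block-diagonal direct sum of square matrices. -/
def dsum {a b : ℕ} (A : Matrix (Fin a) (Fin a) ℂ) (B : Matrix (Fin b) (Fin b) ℂ) :
    Matrix (Fin (a + b)) (Fin (a + b)) ℂ :=
  Matrix.reindex finSumFinEquiv finSumFinEquiv (Matrix.fromBlocks A 0 0 B)

/-- The nilpotent matrix `N = [[0,2],[0,0]]`. -/
def Nmat : Matrix (Fin 2) (Fin 2) ℂ := !![0, 2; 0, 0]

/-- The regularization `M' = M ⊕ εN ⊕ εN`. -/
def Mprime {n : ℕ} (M : Matrix (Fin n) (Fin n) ℂ) (ε : ℝ) :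
    Matrix (Fin (n + 4)) (Fin (n + 4)) ℂ :=
  Matrix.reindex (finCongr (by omega)) (finCongr (by omega))
    (dsum (dsum M ((ε : ℂ) • Nmat)) ((ε : ℂ) • Nmat))

end

noncomputable section Aux

/-! ### Topological and measurable structure of the unitary group -/

instance matSecondCountable (m : ℕ) : SecondCountableTopology (Matrix (Fin m) (Fin m) ℂ) :=
  inferInstanceAs (SecondCountableTopology (Fin m → Fin m → ℂ))

instance ugSecondCountable (m : ℕ) : SecondCountableTopology (Matrix.unitaryGroup (Fin m) ℂ) :=
  TopologicalSpace.secondCountableTopology_induced _ _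
    ((↑) : Matrix.unitaryGroup (Fin m) ℂ → Matrix (Fin m) (Fin m) ℂ)

instance ugTopGroup (m : ℕ) : IsTopologicalGroup (Matrix.unitaryGroup (Fin m) ℂ) where
  continuous_mul := by
    apply Continuous.subtype_mk
    exact ((continuous_subtype_val.comp continuous_fst).matrix_mul
      (continuous_subtype_val.comp continuous_snd))
  continuous_inv := by
    apply Continuous.subtype_mk
    exact (continuous_subtype_val.matrix_conjTranspose).congr (fun U => rfl)

instance ugCompact (m : ℕ) : CompactSpace (Matrix.unitaryGroup (Fin m) ℂ) := by
  have hsub : (Matrix.unitaryGroup (Fin m) ℂ : Set (Matrix (Fin m) (Fin m) ℂ)) ⊆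
      Set.pi Set.univ (fun _ : Fin m => Set.pi Set.univ
        (fun _ : Fin m => Metric.closedBall (0:ℂ) 1)) := by
    intro A hA i _
    intro j _
    simpa using entry_norm_bound_of_unitary hA i j
  have hK : IsCompact (Set.pi Set.univ (fun _ : Fin m => Set.pi Set.univ
      (fun _ : Fin m => Metric.closedBall (0:ℂ) 1))) :=
    isCompact_univ_pi (fun _ => isCompact_univ_pi (fun _ => isCompact_closedBall 0 1))
  have hC : IsClosed (Matrix.unitaryGroup (Fin m) ℂ : Set (Matrix (Fin m) (Fin m) ℂ)) := by
    have heq : (Matrix.unitaryGroup (Fin m) ℂ : Set (Matrix (Fin m) (Fin m) ℂ)) =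
        ((fun A : Matrix (Fin m) (Fin m) ℂ => star A * A) ⁻¹' {1}) ∩
        ((fun A : Matrix (Fin m) (Fin m) ℂ => A * star A) ⁻¹' {1}) := by
      ext A
      exact Unitary.mem_iff
    rw [heq]
    exact IsClosed.inter
      (IsClosed.preimage (continuous_star.matrix_mul continuous_id) isClosed_singleton)
      (IsClosed.preimage (continuous_id.matrix_mul continuous_star) isClosed_singleton)
  exact isCompact_iff_compactSpace.mp (hK.of_isClosed_subset hC hsub)

/-! ### Algebra of `dsum` and the embedding `U(n) → U(n+4)` -/

theorem dsum_mul {a b : ℕ} (A C : Matrix (Fin a) (Fin a) ℂ) (B D : Matrix (Fin b) (Fin b) ℂ) :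
    dsum A B * dsum C D = dsum (A * C) (B * D) := by
  simp only [dsum, reindex_apply, submatrix_mul_equiv, fromBlocks_multiply]
  simp

theorem dsum_one {a b : ℕ} :
    dsum (1 : Matrix (Fin a) (Fin a) ℂ) (1 : Matrix (Fin b) (Fin b) ℂ) = 1 := by
  simp only [dsum, reindex_apply, fromBlocks_one, submatrix_one_equiv]

theorem dsum_star {a b : ℕ} (A : Matrix (Fin a) (Fin a) ℂ) (B : Matrix (Fin b) (Fin b) ℂ) :
    star (dsum A B) = dsum (star A) (star B) := by
  show (dsum A B)ᴴ = _
  simp only [dsum, reindex_apply, conjTranspose_submatrix, fromBlocks_conjTranspose]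
  simp [Matrix.star_eq_conjTranspose]

/-- The embedding of `U(n)` into `U(n+4)` as `U ⊕ 1`. -/
def emb {n : ℕ} : Matrix.unitaryGroup (Fin n) ℂ →* Matrix.unitaryGroup (Fin (n + 4)) ℂ where
  toFun U := ⟨dsum (U : Matrix (Fin n) (Fin n) ℂ) (1 : Matrix (Fin 4) (Fin 4) ℂ), by
    rw [Matrix.mem_unitaryGroup_iff']
    rw [dsum_star, dsum_mul]
    simp only [star_one, one_mul]
    rw [show star (U : Matrix (Fin n) (Fin n) ℂ) * U = 1 from Matrix.UnitaryGroup.star_mul_self U]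
    exact dsum_one⟩
  map_one' := by
    apply Subtype.ext
    show dsum ((1 : Matrix.unitaryGroup (Fin n) ℂ) : Matrix (Fin n) (Fin n) ℂ) 1 = _
    rw [show ((1 : Matrix.unitaryGroup (Fin n) ℂ) : Matrix (Fin n) (Fin n) ℂ) = 1 from rfl,
      dsum_one]
    rfl
  map_mul' U V := by
    apply Subtype.ext
    show dsum ((U : Matrix (Fin n) (Fin n) ℂ) * (V : Matrix (Fin n) (Fin n) ℂ)) 1
        = dsum (U : Matrix (Fin n) (Fin n) ℂ) 1 * dsum (V : Matrix (Fin n) (Fin n) ℂ) 1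
    rw [dsum_mul, one_mul]

theorem emb_continuous {n : ℕ} : Continuous (emb (n := n)) := by
  apply Continuous.subtype_mk
  exact (continuous_subtype_val.matrix_fromBlocks continuous_const continuous_const
    continuous_const).matrix_reindex _ _

theorem emb_coe {n : ℕ} (U : Matrix.unitaryGroup (Fin n) ℂ) :
    (emb U : Matrix (Fin (n + 4)) (Fin (n + 4)) ℂ)
      = dsum (U : Matrix (Fin n) (Fin n) ℂ) (1 : Matrix (Fin 4) (Fin 4) ℂ) := rfl

theorem dsum_apply_ll {a b : ℕ} (A : Matrix (Fin a) (Fin a) ℂ) (B : Matrix (Fin b) (Fin b) ℂ)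
    (i j : Fin a) : dsum A B (Fin.castAdd b i) (Fin.castAdd b j) = A i j := by
  simp [dsum]

theorem dsum_apply_lr {a b : ℕ} (A : Matrix (Fin a) (Fin a) ℂ) (B : Matrix (Fin b) (Fin b) ℂ)
    (i : Fin a) (j : Fin b) : dsum A B (Fin.castAdd b i) (Fin.natAdd a j) = 0 := by
  simp [dsum]

theorem dsum_apply_rl {a b : ℕ} (A : Matrix (Fin a) (Fin a) ℂ) (B : Matrix (Fin b) (Fin b) ℂ)
    (i : Fin b) (j : Fin a) : dsum A B (Fin.natAdd a i) (Fin.castAdd b j) = 0 := by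
  simp [dsum]

theorem dsum_apply_rr {a b : ℕ} (A : Matrix (Fin a) (Fin a) ℂ) (B : Matrix (Fin b) (Fin b) ℂ)
    (i j : Fin b) : dsum A B (Fin.natAdd a i) (Fin.natAdd a j) = B i j := by
  simp [dsum]

theorem emb_mul_apply_left {n : ℕ} (U : Matrix.unitaryGroup (Fin n) ℂ)
    (W : Matrix (Fin (n + 4)) (Fin (n + 4)) ℂ) (i : Fin n) (c : Fin (n + 4)) :
    ((emb U : Matrix (Fin (n + 4)) (Fin (n + 4)) ℂ) * W) (Fin.castAdd 4 i) c
      = ∑ k : Fin n, (U : Matrix (Fin n) (Fin n) ℂ) i k * W (Fin.castAdd 4 k) c := by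
  rw [Matrix.mul_apply, ← Equiv.sum_comp finSumFinEquiv
    (fun k => (emb U : Matrix (Fin (n + 4)) (Fin (n + 4)) ℂ) (Fin.castAdd 4 i) k * W k c),
    Fintype.sum_sum_type]
  simp only [finSumFinEquiv_apply_left, finSumFinEquiv_apply_right, emb_coe,
    dsum_apply_ll, dsum_apply_lr, zero_mul, Finset.sum_const_zero, add_zero]

theorem emb_mul_apply_right {n : ℕ} (U : Matrix.unitaryGroup (Fin n) ℂ)
    (W : Matrix (Fin (n + 4)) (Fin (n + 4)) ℂ) (r : Fin 4) (c : Fin (n + 4)) :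
    ((emb U : Matrix (Fin (n + 4)) (Fin (n + 4)) ℂ) * W) (Fin.natAdd n r) c
      = W (Fin.natAdd n r) c := by
  rw [Matrix.mul_apply, ← Equiv.sum_comp finSumFinEquiv
    (fun k => (emb U : Matrix (Fin (n + 4)) (Fin (n + 4)) ℂ) (Fin.natAdd n r) k * W k c),
    Fintype.sum_sum_type]
  simp [emb_coe, dsum_apply_rl, dsum_apply_rr, Matrix.one_apply]

/-! ### `qform` decompositions -/

theorem qform_reindex {a b : ℕ} (e : Fin a ≃ Fin b) (A : Matrix (Fin a) (Fin a) ℂ)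
    (x : Fin b → ℂ) :
    qform (Matrix.reindex e e A) x = qform A (fun i => x (e i)) := by
  unfold qform
  simp only [dotProduct, mulVec, reindex_apply, submatrix_apply, Pi.star_apply]
  rw [← Equiv.sum_comp e (fun i => star (x i) * ∑ j, A (e.symm i) (e.symm j) * x j)]
  apply Finset.sum_congr rfl
  intro i _
  simp only [Equiv.symm_apply_apply]
  congr 1
  rw [← Equiv.sum_comp e (fun j => A i (e.symm j) * x j)]
  simp

theorem qform_dsum {a b : ℕ} (A : Matrix (Fin a) (Fin a) ℂ) (B : Matrix (Fin b) (Fin b) ℂ)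
    (z : Fin (a + b) → ℂ) :
    qform (dsum A B) z = qform A (fun i => z (finSumFinEquiv (Sum.inl i)))
      + qform B (fun j => z (finSumFinEquiv (Sum.inr j))) := by
  unfold qform dsum
  simp only [dotProduct, mulVec, reindex_apply, submatrix_apply, Pi.star_apply]
  rw [← Equiv.sum_comp finSumFinEquiv
    (fun i => star (z i) * ∑ j, fromBlocks A 0 0 B (finSumFinEquiv.symm i)
      (finSumFinEquiv.symm j) * z j),
    Fintype.sum_sum_type]
  congr 1 <;>
  · apply Finset.sum_congr rfl
    intro i _
    simp only [Equiv.symm_apply_apply]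
    congr 1
    rw [← Equiv.sum_comp finSumFinEquiv
      (fun j => fromBlocks A 0 0 B _ (finSumFinEquiv.symm j) * z j), Fintype.sum_sum_type]
    simp [fromBlocks]

theorem qform_smulN (ε : ℝ) (y : Fin 2 → ℂ) :
    qform ((ε : ℂ) • Nmat) y = (ε : ℂ) * (2 * ((starRingEnd ℂ) (y 0) * y 1)) := by
  simp [qform, Nmat, dotProduct, mulVec, Fin.sum_univ_two]
  ring

set_option maxHeartbeats 1000000 in
theorem qform_Mprime {n : ℕ} (M : Matrix (Fin n) (Fin n) ℂ) (ε : ℝ) (q' : Fin (n + 4) → ℂ) :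
    qform (Mprime M ε) q' =
      qform M (fun i : Fin n => q' ⟨i.1, by omega⟩)
      + (ε : ℂ) * (2 * ((starRingEnd ℂ) (q' ⟨n, by omega⟩) * q' ⟨n + 1, by omega⟩))
      + (ε : ℂ) * (2 * ((starRingEnd ℂ) (q' ⟨n + 2, by omega⟩) * q' ⟨n + 3, by omega⟩)) := by
  unfold Mprime
  rw [qform_reindex, qform_dsum, qform_dsum, qform_smulN, qform_smulN]
  have hf : (fun i : Fin n => q' ((finCongr (by omega : n + 2 + 2 = n + 4))
      (finSumFinEquiv (Sum.inl (finSumFinEquiv (Sum.inl i)))))) =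
      fun i : Fin n => q' ⟨i.1, by omega⟩ := by
    funext i
    apply congrArg
    apply Fin.ext
    simp
  have h1 : ((finCongr (by omega : n + 2 + 2 = n + 4))
      (finSumFinEquiv (Sum.inl (finSumFinEquiv (Sum.inr (0 : Fin 2)))))) =
      (⟨n, by omega⟩ : Fin (n + 4)) := by apply Fin.ext; simp
  have h2 : ((finCongr (by omega : n + 2 + 2 = n + 4))
      (finSumFinEquiv (Sum.inl (finSumFinEquiv (Sum.inr (1 : Fin 2)))))) =
      (⟨n + 1, by omega⟩ : Fin (n + 4)) := by apply Fin.ext; simp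
  have h3 : ((finCongr (by omega : n + 2 + 2 = n + 4))
      (finSumFinEquiv (Sum.inr (0 : Fin 2)))) = (⟨n + 2, by omega⟩ : Fin (n + 4)) := by
    apply Fin.ext; simp
  have h4 : ((finCongr (by omega : n + 2 + 2 = n + 4))
      (finSumFinEquiv (Sum.inr (1 : Fin 2)))) = (⟨n + 3, by omega⟩ : Fin (n + 4)) := by
    apply Fin.ext; simp
  rw [hf, h1, h2, h3, h4]

theorem sum_split4 {n : ℕ} (f : Fin (n + 4) → ℝ) :
    ∑ j : Fin (n + 4), f j = (∑ i : Fin n, f ⟨i.1, by omega⟩) + f ⟨n, by omega⟩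
      + f ⟨n + 1, by omega⟩ + f ⟨n + 2, by omega⟩ + f ⟨n + 3, by omega⟩ := by
  rw [Fin.sum_univ_castSucc, Fin.sum_univ_castSucc, Fin.sum_univ_castSucc, Fin.sum_univ_castSucc]
  rfl

/-! ### The core deterministic inequality -/

theorem core_ineq {n : ℕ} (M : Matrix (Fin n) (Fin n) ℂ) {ε : ℝ} (hε : 0 < ε)
    (q' : Fin (n + 4) → ℂ) (hq : ∑ j : Fin (n + 4), Complex.normSq (q' j) = 1)
    (H : ‖qform M (fun i : Fin n => q' ⟨i.1, by omega⟩)‖ ≤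
      ε * ∑ i : Fin n, Complex.normSq (q' ⟨i.1, by omega⟩)) :
    ‖qform (Mprime M ε) q'‖ ≤ ε := by
  rw [qform_Mprime]
  have habs : ∀ (a b : Fin (n + 4)), ‖(ε : ℂ) * (2 * ((starRingEnd ℂ) (q' a) * q' b))‖
      ≤ ε * (Complex.normSq (q' a) + Complex.normSq (q' b)) := by
    intro a b
    rw [norm_mul, norm_mul, norm_mul]
    simp only [Complex.norm_real, Real.norm_eq_abs, Complex.norm_two, Complex.norm_conj]
    rw [abs_of_pos hε]
    have h2 : 2 * (‖q' a‖ * ‖q' b‖) ≤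
        Complex.normSq (q' a) + Complex.normSq (q' b) := by
      have := two_mul_le_add_sq (‖q' a‖) (‖q' b‖)
      rw [Complex.normSq_eq_norm_sq, Complex.normSq_eq_norm_sq]
      nlinarith [this]
    nlinarith [norm_nonneg (q' a), norm_nonneg (q' b), hε.le]
  calc ‖qform M (fun i : Fin n => q' ⟨i.1, by omega⟩)
        + (ε : ℂ) * (2 * ((starRingEnd ℂ) (q' ⟨n, by omega⟩) * q' ⟨n + 1, by omega⟩))
        + (ε : ℂ) * (2 * ((starRingEnd ℂ) (q' ⟨n + 2, by omega⟩) * q' ⟨n + 3, by omega⟩))‖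
      ≤ ‖qform M (fun i : Fin n => q' ⟨i.1, by omega⟩)‖
        + ‖(ε : ℂ) * (2 * ((starRingEnd ℂ) (q' ⟨n, by omega⟩) * q' ⟨n + 1, by omega⟩))‖
        + ‖(ε : ℂ) * (2 * ((starRingEnd ℂ) (q' ⟨n + 2, by omega⟩)
            * q' ⟨n + 3, by omega⟩))‖ := by
        apply le_trans (norm_add_le _ _)
        gcongr
        exact norm_add_le _ _
    _ ≤ ε * (∑ i : Fin n, Complex.normSq (q' ⟨i.1, by omega⟩))
        + ε * (Complex.normSq (q' ⟨n, by omega⟩) + Complex.normSq (q' ⟨n + 1, by omega⟩))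
        + ε * (Complex.normSq (q' ⟨n + 2, by omega⟩) + Complex.normSq (q' ⟨n + 3, by omega⟩)) := by
        have hb1 := habs ⟨n, by omega⟩ ⟨n + 1, by omega⟩
        have hb2 := habs ⟨n + 2, by omega⟩ ⟨n + 3, by omega⟩
        gcongr
    _ = ε * ∑ j : Fin (n + 4), Complex.normSq (q' j) := by
        rw [sum_split4 (fun j => Complex.normSq (q' j))]
        ring
    _ = ε := by rw [hq, mul_one]


/-! ### Norm computations -/

theorem dot_star_self {m : ℕ} (x : Fin m → ℂ) :
    dotProduct (star x) x = ((∑ i, Complex.normSq (x i) : ℝ) : ℂ) := by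
  simp only [dotProduct, Pi.star_apply, Complex.ofReal_sum]
  apply Finset.sum_congr rfl
  intro i _
  rw [Complex.normSq_eq_conj_mul_self]
  rfl

/-- Columns of a unitary matrix are unit vectors. -/
theorem col_normSq_one {m : ℕ} (W : Matrix.unitaryGroup (Fin m) ℂ) (c : Fin m) :
    ∑ j : Fin m, Complex.normSq ((W : Matrix (Fin m) (Fin m) ℂ) j c) = 1 := by
  have h := Matrix.UnitaryGroup.star_mul_self W
  have h2 := congrFun (congrFun h c) c
  rw [Matrix.mul_apply, Matrix.one_apply_eq] at h2
  have h3 : ∑ j : Fin m, (star (W : Matrix (Fin m) (Fin m) ℂ)) c j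
      * (W : Matrix (Fin m) (Fin m) ℂ) j c
      = ((∑ j : Fin m, Complex.normSq ((W : Matrix (Fin m) (Fin m) ℂ) j c) : ℝ) : ℂ) := by
    rw [Complex.ofReal_sum]
    apply Finset.sum_congr rfl
    intro j _
    rw [Complex.normSq_eq_conj_mul_self]
    rfl
  rw [h3] at h2
  exact_mod_cast h2

/-- Unitary matrices preserve the ℓ² norm. -/
theorem mulVec_normSq {m : ℕ} (U : Matrix.unitaryGroup (Fin m) ℂ) (y : Fin m → ℂ) :
    ∑ i : Fin m, Complex.normSq (((U : Matrix (Fin m) (Fin m) ℂ).mulVec y) i)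
      = ∑ i : Fin m, Complex.normSq (y i) := by
  have key : dotProduct (star ((U : Matrix (Fin m) (Fin m) ℂ).mulVec y))
      ((U : Matrix (Fin m) (Fin m) ℂ).mulVec y) = dotProduct (star y) y := by
    rw [Matrix.star_mulVec, Matrix.dotProduct_mulVec, Matrix.vecMul_vecMul]
    rw [show ((U : Matrix (Fin m) (Fin m) ℂ))ᴴ * U = 1 from Matrix.UnitaryGroup.star_mul_self U]
    rw [Matrix.vecMul_one]
  rw [dot_star_self, dot_star_self] at key
  exact_mod_cast key

/-! ### Existence of a unitary matrix with prescribed first unit column -/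

theorem exists_unitary_first_col {m : ℕ} (hm : 1 ≤ m) (v : Fin m → ℂ)
    (hv : ∑ i, Complex.normSq (v i) = 1) :
    ∃ V : Matrix.unitaryGroup (Fin m) ℂ,
      ∀ i, (V : Matrix (Fin m) (Fin m) ℂ) i ⟨0, hm⟩ = v i := by
  classical
  set E := EuclideanSpace ℂ (Fin m)
  set vE : E := (WithLp.equiv 2 (Fin m → ℂ)).symm v with hvE
  have hnorm : ‖vE‖ = 1 := by
    rw [EuclideanSpace.norm_eq]
    have : ∀ i, ‖vE i‖ ^ 2 = Complex.normSq (v i) := by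
      intro i
      rw [show vE i = v i from rfl, ← Complex.sq_norm]
    rw [show (∑ i, ‖vE i‖ ^ 2) = (1 : ℝ) by rw [Finset.sum_congr rfl fun i _ => this i, hv]]
    exact Real.sqrt_one
  set i0 : Fin m := ⟨0, hm⟩
  have horth : Orthonormal ℂ (({i0} : Set (Fin m)).restrict (fun _ => vE)) := by
    constructor
    · intro i
      exact hnorm
    · intro i j hij
      exact absurd (Subtype.ext (by
        have hi := i.2
        have hj := j.2
        simp only [Set.mem_singleton_iff] at hi hj
        rw [hi, hj])) hij
  obtain ⟨b, hb⟩ := horth.exists_orthonormalBasis_extension_of_card_eq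
    (by rw [show Module.finrank ℂ E = m from finrank_euclideanSpace_fin]; simp)
  have hb0 : b i0 = vE := hb i0 rfl
  set V : Matrix (Fin m) (Fin m) ℂ := Matrix.of (fun i j => b j i) with hV
  have hVmem : V ∈ Matrix.unitaryGroup (Fin m) ℂ := by
    rw [Matrix.mem_unitaryGroup_iff']
    ext j k
    rw [Matrix.mul_apply, Matrix.one_apply]
    have : ∑ i, (star V) j i * V i k = inner ℂ (b j) (b k) := by
      rw [PiLp.inner_apply]
      apply Finset.sum_congr rfl
      intro i _
      simp only [Matrix.star_apply, hV, Matrix.of_apply, RCLike.inner_apply]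
      exact mul_comm _ _
    rw [this, orthonormal_iff_ite.mp b.orthonormal]
  exact ⟨⟨V, hVmem⟩, fun i => by
    show V i i0 = v i
    rw [hV]
    show b i0 i = v i
    rw [hb0]
    rfl⟩

/-! ### Haar measure invariance -/

theorem haar_map_mul_right {m : ℕ} (μ : Measure (Matrix.unitaryGroup (Fin m) ℂ))
    [μ.IsHaarMeasure] [IsProbabilityMeasure μ] (g : Matrix.unitaryGroup (Fin m) ℂ) :
    μ.map (· * g) = μ := by
  have h1 : (μ.map (· * g)).IsHaarMeasure := inferInstance
  have h2 : IsProbabilityMeasure (μ.map (· * g)) :=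
    Measure.isProbabilityMeasure_map (measurable_mul_const g).aemeasurable
  exact MeasureTheory.Measure.isHaarMeasure_eq_of_isProbabilityMeasure _ _



/-! ### Continuity / measurability of the events -/

theorem qform_continuous {m : ℕ} (M : Matrix (Fin m) (Fin m) ℂ) :
    Continuous (fun x : Fin m → ℂ => qform M x) := by
  unfold qform
  exact Continuous.dotProduct continuous_star (continuous_const.matrix_mulVec continuous_id)

theorem firstColumn_continuous {m : ℕ} (hm : 1 ≤ m) :
    Continuous (fun U : Matrix.unitaryGroup (Fin m) ℂ => firstColumn hm U) := by
  unfold firstColumn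
  exact continuous_pi fun i => continuous_subtype_val.matrix_elem i (⟨0, hm⟩ : Fin m)

theorem event_closed {m : ℕ} (hm : 1 ≤ m) (M : Matrix (Fin m) (Fin m) ℂ) (ε : ℝ) :
    IsClosed {U : Matrix.unitaryGroup (Fin m) ℂ |
      ‖qform M (firstColumn hm U)‖ ≤ ε} := by
  have hc : Continuous (fun U : Matrix.unitaryGroup (Fin m) ℂ =>
      ‖qform M (firstColumn hm U)‖) :=
    continuous_norm.comp ((qform_continuous M).comp (firstColumn_continuous hm))
  exact isClosed_Iic.preimage hc

/-! ### `qform` under scaling -/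

theorem qform_zero {m : ℕ} (M : Matrix (Fin m) (Fin m) ℂ) : qform M 0 = 0 := by
  simp [qform]

theorem qform_smul {m : ℕ} (M : Matrix (Fin m) (Fin m) ℂ) (c : ℂ) (y : Fin m → ℂ) :
    qform M (c • y) = (starRingEnd ℂ) c * c * qform M y := by
  unfold qform
  rw [Matrix.mulVec_smul, star_smul, smul_dotProduct, dotProduct_smul]
  simp only [smul_eq_mul, Complex.star_def]
  ring

/-! ### The main inequality at the level of `ℝ≥0∞` -/

theorem main_ineq (n : ℕ) (hn : 1 ≤ n) (M : Matrix (Fin n) (Fin n) ℂ) (ε : ℝ) (hε : 0 < ε)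
    (μ : Measure (Matrix.unitaryGroup (Fin n) ℂ)) [μ.IsHaarMeasure] [IsProbabilityMeasure μ]
    (ν : Measure (Matrix.unitaryGroup (Fin (n + 4)) ℂ)) [ν.IsHaarMeasure]
    [IsProbabilityMeasure ν] (h4 : 1 ≤ n + 4) :
    μ {U | ‖qform M (firstColumn hn U)‖ ≤ ε} ≤
      ν {U | ‖qform (Mprime M ε) (firstColumn h4 U)‖ ≤ ε} := by
  classical
  set E : Set (Matrix.unitaryGroup (Fin n) ℂ) :=
    {U | ‖qform M (firstColumn hn U)‖ ≤ ε} with hEdef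
  set E' : Set (Matrix.unitaryGroup (Fin (n + 4)) ℂ) :=
    {U | ‖qform (Mprime M ε) (firstColumn h4 U)‖ ≤ ε} with hE'def
  have hEclosed : IsClosed E := event_closed hn M ε
  have hE'closed : IsClosed E' := event_closed h4 (Mprime M ε) ε
  set S : Set (Matrix.unitaryGroup (Fin n) ℂ × Matrix.unitaryGroup (Fin (n + 4)) ℂ) :=
    {p | emb p.1 * p.2 ∈ E'} with hSdef
  have hSmeas : MeasurableSet S := by
    have hcont : Continuous (fun p : Matrix.unitaryGroup (Fin n) ℂ ×
        Matrix.unitaryGroup (Fin (n + 4)) ℂ => emb p.1 * p.2) :=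
      continuous_mul.comp ((emb_continuous.comp continuous_fst).prodMk continuous_snd)
    exact (hE'closed.preimage hcont).measurableSet
  have h1 : (μ.prod ν) S = ν E' := by
    rw [MeasureTheory.Measure.prod_apply hSmeas]
    have hfib : ∀ U, ν (Prod.mk U ⁻¹' S) = ν E' := by
      intro U
      have hpre : Prod.mk U ⁻¹' S = (fun V => emb U * V) ⁻¹' E' := rfl
      rw [hpre]
      exact measure_preimage_mul ν (emb U) E'
    calc (∫⁻ U, ν (Prod.mk U ⁻¹' S) ∂μ) = ∫⁻ _, ν E' ∂μ := lintegral_congr hfib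
      _ = ν E' := by rw [lintegral_const, measure_univ, mul_one]
  have perV : ∀ V : Matrix.unitaryGroup (Fin (n + 4)) ℂ,
      μ E ≤ μ ((fun U => (U, V)) ⁻¹' S) := by
    intro V
    set x : Fin n → ℂ :=
      fun k => (V : Matrix (Fin (n + 4)) (Fin (n + 4)) ℂ) (Fin.castAdd 4 k) ⟨0, h4⟩ with hxdef
    set s : ℝ := ∑ k, Complex.normSq (x k) with hsdef
    -- q' is the first column of `emb U * V`
    have hq'left : ∀ (U : Matrix.unitaryGroup (Fin n) ℂ) (i : Fin n),
        firstColumn h4 (emb U * V) ⟨i.1, by omega⟩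
          = ((U : Matrix (Fin n) (Fin n) ℂ).mulVec x) i := by
      intro U i
      show ((emb U * V : Matrix.unitaryGroup (Fin (n + 4)) ℂ) :
        Matrix (Fin (n + 4)) (Fin (n + 4)) ℂ) ⟨i.1, by omega⟩ ⟨0, h4⟩ = _
      rw [show ((emb U * V : Matrix.unitaryGroup (Fin (n + 4)) ℂ) :
          Matrix (Fin (n + 4)) (Fin (n + 4)) ℂ)
        = (emb U : Matrix (Fin (n + 4)) (Fin (n + 4)) ℂ) *
          (V : Matrix (Fin (n + 4)) (Fin (n + 4)) ℂ) from rfl]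
      rw [show (⟨i.1, by omega⟩ : Fin (n + 4)) = Fin.castAdd 4 i from Fin.ext rfl]
      rw [emb_mul_apply_left]
      rfl
    have hq'sum : ∀ U : Matrix.unitaryGroup (Fin n) ℂ,
        ∑ j : Fin (n + 4), Complex.normSq (firstColumn h4 (emb U * V) j) = 1 := by
      intro U
      exact col_normSq_one (emb U * V) ⟨0, h4⟩
    have hblock : ∀ U : Matrix.unitaryGroup (Fin n) ℂ,
        ∑ i : Fin n, Complex.normSq (firstColumn h4 (emb U * V) ⟨i.1, by omega⟩) = s := by
      intro U
      rw [Finset.sum_congr rfl (fun i _ => by rw [hq'left U i])]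
      exact mulVec_normSq U x
    by_cases hs : s = 0
    · -- the first block of the column of `V` vanishes; everything is in `S`
      have hx : x = 0 := by
        funext k
        have hnonneg : ∀ k ∈ Finset.univ, (0:ℝ) ≤ Complex.normSq (x k) :=
          fun k _ => Complex.normSq_nonneg _
        have hs' : ∑ k, Complex.normSq (x k) = 0 := by rw [← hsdef]; exact hs
        have hk := (Finset.sum_eq_zero_iff_of_nonneg hnonneg).mp hs' k (Finset.mem_univ k)
        exact Complex.normSq_eq_zero.mp hk
      have hall : ∀ U : Matrix.unitaryGroup (Fin n) ℂ, (U, V) ∈ S := by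
        intro U
        show emb U * V ∈ E'
        show ‖qform (Mprime M ε) (firstColumn h4 (emb U * V))‖ ≤ ε
        apply core_ineq M hε _ (hq'sum U)
        have hz : (fun i : Fin n => firstColumn h4 (emb U * V) ⟨i.1, by omega⟩) = 0 := by
          funext i
          rw [hq'left U i, hx, Matrix.mulVec_zero]
        rw [hz, qform_zero]
        simp only [norm_zero]
        exact mul_nonneg hε.le (Finset.sum_nonneg fun i _ => Complex.normSq_nonneg _)
      have huniv : ((fun U => (U, V)) ⁻¹' S) = Set.univ :=
        Set.eq_univ_iff_forall.mpr hall
      rw [huniv]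
      exact measure_mono (Set.subset_univ E)
    · have hsnonneg : (0:ℝ) ≤ s := Finset.sum_nonneg fun k _ => Complex.normSq_nonneg _
      have hspos : 0 < s := lt_of_le_of_ne hsnonneg (Ne.symm hs)
      set t : ℝ := Real.sqrt s with htdef
      have htpos : 0 < t := Real.sqrt_pos.mpr hspos
      have hts : t ^ 2 = s := Real.sq_sqrt hsnonneg
      set v : Fin n → ℂ := fun k => ((t : ℂ))⁻¹ * x k with hvdef
      have htne : (t : ℂ) ≠ 0 := by
        simp only [ne_eq, Complex.ofReal_eq_zero]
        exact htpos.ne'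
      have hvnorm : ∑ k, Complex.normSq (v k) = 1 := by
        have : ∀ k, Complex.normSq (v k) = s⁻¹ * Complex.normSq (x k) := by
          intro k
          rw [hvdef]
          rw [Complex.normSq_mul, Complex.normSq_inv, Complex.normSq_ofReal]
          rw [show t * t = s by rw [← hts]; ring]
        rw [Finset.sum_congr rfl fun k _ => this k, ← Finset.mul_sum, ← hsdef,
          inv_mul_cancel₀ hs]
      obtain ⟨V₀, hV₀⟩ := exists_unitary_first_col hn v hvnorm
      have hxv : x = (t : ℂ) • v := by
        funext k
        show x k = (t : ℂ) * v k
        rw [hvdef]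
        field_simp
      have hsub : ((fun U => U * V₀) ⁻¹' E) ⊆ ((fun U => (U, V)) ⁻¹' S) := by
        intro U hU
        show emb U * V ∈ E'
        show ‖qform (Mprime M ε) (firstColumn h4 (emb U * V))‖ ≤ ε
        apply core_ineq M hε _ (hq'sum U)
        -- the first-block of the column is `U.mulVec x = t • U.mulVec v`
        have hfc : firstColumn hn (U * V₀) = (U : Matrix (Fin n) (Fin n) ℂ).mulVec v := by
          funext i
          show ((U * V₀ : Matrix.unitaryGroup (Fin n) ℂ) :
            Matrix (Fin n) (Fin n) ℂ) i ⟨0, hn⟩ = _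
          rw [show ((U * V₀ : Matrix.unitaryGroup (Fin n) ℂ) : Matrix (Fin n) (Fin n) ℂ)
            = (U : Matrix (Fin n) (Fin n) ℂ) * (V₀ : Matrix (Fin n) (Fin n) ℂ) from rfl]
          rw [Matrix.mul_apply]
          simp only [Matrix.mulVec, dotProduct]
          exact Finset.sum_congr rfl fun k _ => by rw [hV₀ k]
        have hU' : ‖qform M ((U : Matrix (Fin n) (Fin n) ℂ).mulVec v)‖ ≤ ε := by
          rw [← hfc]
          exact hU
        have hblockfun : (fun i : Fin n => firstColumn h4 (emb U * V) ⟨i.1, by omega⟩)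
            = (U : Matrix (Fin n) (Fin n) ℂ).mulVec x := funext fun i => hq'left U i
        rw [hblockfun, hblock U]
        rw [hxv, Matrix.mulVec_smul, qform_smul]
        rw [norm_mul, norm_mul]
        have : (starRingEnd ℂ) ((t : ℂ)) = (t : ℂ) := Complex.conj_ofReal t
        rw [this]
        simp only [Complex.norm_real, Real.norm_eq_abs, abs_of_pos htpos]
        have habsnn : (0:ℝ) ≤ ‖qform M ((U : Matrix (Fin n) (Fin n) ℂ).mulVec v)‖ :=
          norm_nonneg _
        nlinarith [hU', htpos.le, hspos.le, hts,
          mul_le_mul_of_nonneg_left hU' hspos.le]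
      calc μ E = (μ.map (· * V₀)) E := by rw [haar_map_mul_right μ V₀]
        _ = μ ((fun U => U * V₀) ⁻¹' E) :=
            MeasureTheory.Measure.map_apply (measurable_mul_const V₀) hEclosed.measurableSet
        _ ≤ μ ((fun U => (U, V)) ⁻¹' S) := measure_mono hsub
  have h2 : μ E ≤ (μ.prod ν) S := by
    rw [MeasureTheory.Measure.prod_apply_symm hSmeas]
    calc μ E = ∫⁻ _, μ E ∂ν := by rw [lintegral_const, measure_univ, mul_one]
      _ ≤ ∫⁻ V, μ ((fun U => (U, V)) ⁻¹' S) ∂ν := lintegral_mono fun V => perV V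
  exact h2.trans h1.le


end Aux

/-- regularization only increases small-ball probability:
`Pr(|q* M q| ≤ ε) ≤ Pr(|q'* M' q'| ≤ ε)` where `M' = M ⊕ εN ⊕ εN`. -/
theorem stmt5 (n : ℕ) (hn : 1 ≤ n) (M : Matrix (Fin n) (Fin n) ℂ) (ε : ℝ) (hε : 0 < ε)
    (μ : Measure (Matrix.unitaryGroup (Fin n) ℂ)) [μ.IsHaarMeasure] [IsProbabilityMeasure μ]
    (ν : Measure (Matrix.unitaryGroup (Fin (n + 4)) ℂ)) [ν.IsHaarMeasure]
    [IsProbabilityMeasure ν] :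
    (μ {U | ‖qform M (firstColumn hn U)‖ ≤ ε}).toReal ≤
      (ν {U | ‖qform (Mprime M ε) (firstColumn (by omega) U)‖ ≤ ε}).toReal := by
  apply ENNReal.toReal_mono (measure_ne_top ν _)
  exact main_ineq n hn M ε hε μ ν (by omega)
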